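/- Let R be a (possibly noncommutative) ring, let r be an odd positive integer, δ ≥ 2 and L ≥ 1 integers, set m = L(r+1)/2, and let Q_0,…,Q_{L−1} and Q'_0,…,Q'_{L−1} be polynomials over R each of natDegree at most (r−1)/2, and let g be a polynomial over R of natDegree r+δ−1. Define p_A(x) = Σ_{t=0}^{L−1} Q_t(x)·g(x)^t and p_B(x) = Σ_{t=0}^{L−1} Q'_t(x)·g(x)^t. Then the natDegree of p_A(x)·p_B(x) is at most r − 1 + 2(L−1)(r+δ−1), which equals 4m − r − 3 + (4m/(r+1) − 2)(δ−2). -/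

import Mathlib

open Polynomial Finset

/-- Degree computation underlying Theorem 5: if the chunk polynomials `Q_t, Q'_t` have
degree at most `(r-1)/2` and `g` has degree `r+δ-1`, then the product of the LRC
encodings `p_A = Σ_t Q_t g^t`, `p_B = Σ_t Q'_t g^t` has degree at most
`r - 1 + 2(L-1)(r+δ-1) = 4m - r - 3 + (4m/(r+1) - 2)(δ-2)`, where `m = L(r+1)/2`. -/
theorem stmt_12 {R : Type*} [Ring R] (r δ L m : ℕ)
    (hodd : Odd r) (hrpos : 0 < r) (hδ : 2 ≤ δ) (hL : 1 ≤ L)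
    (hm : m = L * ((r + 1) / 2))
    (Q Q' : ℕ → R[X])
    (hQ : ∀ t, (Q t).natDegree ≤ (r - 1) / 2)
    (hQ' : ∀ t, (Q' t).natDegree ≤ (r - 1) / 2)
    (g : R[X]) (hg : g.natDegree = r + δ - 1)
    (pA pB : R[X])
    (hpA : pA = ∑ t ∈ range L, Q t * g ^ t)
    (hpB : pB = ∑ t ∈ range L, Q' t * g ^ t) :
    (pA * pB).natDegree ≤ r - 1 + 2 * (L - 1) * (r + δ - 1)
      ∧ r - 1 + 2 * (L - 1) * (r + δ - 1)
          = 4 * m - r - 3 + (4 * m / (r + 1) - 2) * (δ - 2) := by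
  obtain ⟨k, hk⟩ := hodd
  have hbound : ∀ (P : ℕ → R[X]), (∀ t, (P t).natDegree ≤ (r - 1) / 2) →
      (∑ t ∈ range L, P t * g ^ t).natDegree ≤ (r - 1) / 2 + (L - 1) * (r + δ - 1) := by
    intro P hP
    refine natDegree_sum_le_of_forall_le _ _ ?_
    intro t ht
    calc (P t * g ^ t).natDegree ≤ (P t).natDegree + (g ^ t).natDegree :=
          natDegree_mul_le
      _ ≤ (r - 1) / 2 + t * g.natDegree :=
          add_le_add (hP t) (natDegree_pow_le)
      _ ≤ (r - 1) / 2 + (L - 1) * (r + δ - 1) := by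
          rw [hg]
          have : t ≤ L - 1 := by
            have := mem_range.mp ht; omega
          exact Nat.add_le_add_left (Nat.mul_le_mul_right _ this) _
  constructor
  · calc (pA * pB).natDegree ≤ pA.natDegree + pB.natDegree := natDegree_mul_le
      _ ≤ ((r - 1) / 2 + (L - 1) * (r + δ - 1)) + ((r - 1) / 2 + (L - 1) * (r + δ - 1)) := by
          rw [hpA, hpB]; exact add_le_add (hbound Q hQ) (hbound Q' hQ')
      _ = r - 1 + 2 * (L - 1) * (r + δ - 1) := by
          have h2 : 2 * (L - 1) * (r + δ - 1)
              = (L - 1) * (r + δ - 1) + (L - 1) * (r + δ - 1) := by ring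
          rw [h2]
          generalize (L - 1) * (r + δ - 1) = X
          omega
  · clear hbound hpA hpB hQ hQ' Q Q' hg g pA pB
    obtain ⟨L', rfl⟩ : ∃ L', L = L' + 1 := ⟨L - 1, by omega⟩
    obtain ⟨δ', rfl⟩ : ∃ δ', δ = δ' + 2 := ⟨δ - 2, by omega⟩
    subst hk
    have hhalf : (2 * k + 1 + 1) / 2 = k + 1 := by omega
    rw [hhalf] at hm
    subst hm
    have hdiv : 4 * ((L' + 1) * (k + 1)) / (2 * k + 1 + 1) = 2 * (L' + 1) := by
      have h4 : 4 * ((L' + 1) * (k + 1)) = (2 * (L' + 1)) * (2 * k + 1 + 1) := by ring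
      rw [h4]
      exact Nat.mul_div_cancel _ (by omega)
    rw [hdiv]
    have g1 : 2 * (L' + 1) - 2 = 2 * L' := by omega
    have g2 : δ' + 2 - 2 = δ' := by omega
    have g3 : 2 * k + 1 - 1 = 2 * k := by omega
    have g4 : L' + 1 - 1 = L' := by omega
    have g5 : 2 * k + 1 + (δ' + 2) - 1 = 2 * k + δ' + 2 := by omega
    rw [g1, g2, g3, g4, g5]
    have e1 : 2 * L' * (2 * k + δ' + 2) = 4 * (L' * k) + 2 * (L' * δ') + 4 * L' := by ring
    have e2 : 2 * L' * δ' = 2 * (L' * δ') := by ring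
    have e3 : 4 * ((L' + 1) * (k + 1)) = 4 * (L' * k) + 4 * L' + 4 * k + 4 := by ring
    rw [e1, e2, e3]
    generalize L' * k = A
    generalize L' * δ' = B
    omega
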